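/- Let p and q be odd positive integers, and let A be a real p×p matrix and B a real q×q matrix with Aᵀ·A = 1, det A = 1, Bᵀ·B = 1 and det B = 1. If the Kronecker product A ⊗ B equals the identity matrix of size pq, then A = 1 and B = 1. -/

import Mathlib

open Matrix Kronecker

/-- Let `p, q` be odd positive integers and `A`, `B` special orthogonal real matrices of sizes
`p` and `q`.  If the Kronecker product `A ⊗ₖ B` is the identity, then `A = 1` and `B = 1`. -/
theorem kronecker_eq_one_of_special_orthogonal
    (p q : ℕ) (hp : Odd p) (hp' : 0 < p) (hq : Odd q) (hq' : 0 < q)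
    (A : Matrix (Fin p) (Fin p) ℝ) (B : Matrix (Fin q) (Fin q) ℝ)
    (hA : Aᵀ * A = 1) (hdetA : A.det = 1) (hB : Bᵀ * B = 1) (hdetB : B.det = 1)
    (h : A ⊗ₖ B = 1) : A = 1 ∧ B = 1 := by
  have key : ∀ i k : Fin p, ∀ j l : Fin q,
      A i k * B j l = if (i, j) = (k, l) then 1 else 0 := by
    intro i k j l
    have := congrFun (congrFun h (i, j)) (k, l)
    simpa [Matrix.one_apply] using this
  set i0 : Fin p := ⟨0, hp'⟩
  set j0 : Fin q := ⟨0, hq'⟩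
  set c : ℝ := A i0 i0 with hc
  have hdprod : ∀ i : Fin p, ∀ j : Fin q, A i i * B j j = 1 := by
    intro i j
    simpa using key i i j j
  have hBne : B j0 j0 ≠ 0 := by
    intro h0
    have := hdprod i0 j0
    rw [h0, mul_zero] at this
    exact zero_ne_one this
  have hcne : c ≠ 0 := by
    intro h0
    have := hdprod i0 j0
    rw [← hc, h0, zero_mul] at this
    exact zero_ne_one this
  -- A = c • 1
  have hAc : A = c • (1 : Matrix (Fin p) (Fin p) ℝ) := by
    ext i k
    by_cases hik : i = k
    · subst hik
      have h1 : A i i * B j0 j0 = 1 := hdprod i j0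
      have h2 : c * B j0 j0 = 1 := hdprod i0 j0
      have : A i i = c := by
        field_simp at h1 h2
        have := h1.trans h2.symm
        exact mul_right_cancel₀ hBne (this.trans (mul_comm _ _))
      simp [this, Matrix.one_apply]
    · have : A i k * B j0 j0 = 0 := by
        have := key i k j0 j0
        simpa [hik] using this
      have : A i k = 0 := by
        rcases mul_eq_zero.mp this with h' | h'
        · exact h'
        · exact absurd h' hBne
      simp [this, Matrix.one_apply, hik]
  have hcpow : c ^ p = 1 := by
    have := hdetA
    rw [hAc, Matrix.det_smul, Matrix.det_one, mul_one] at this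
    simpa using this
  have hc1 : c = 1 := by
    have := hp.strictMono_pow (R := ℝ) |>.injective
    have h1 : c ^ p = 1 ^ p := by rw [hcpow, one_pow]
    exact this h1
  have hA1 : A = 1 := by rw [hAc, hc1, one_smul]
  refine ⟨hA1, ?_⟩
  -- B entries
  ext j l
  by_cases hjl : j = l
  · subst hjl
    have := hdprod i0 j
    rw [← hc, hc1, one_mul] at this
    simp [this, Matrix.one_apply]
  · have hz : A i0 i0 * B j l = 0 := by
      have := key i0 i0 j l
      simpa [hjl] using this
    rw [← hc, hc1, one_mul] at hz
    simp [hz, Matrix.one_apply, hjl]
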